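/- arXiv:2003.07286 — 10 statements merged into one kernel-verified Lean document; each statement's English description precedes it below -/
import Mathlib

section
/- Let ι be a finite index set, let a be a nonzero pure-imaginary quaternion, let b : ι → ℍ assign to each index a nonzero pure-imaginary quaternion, and let E : ι → ℍ. Assume (closing of the primal surface) that the imaginary parts of the hyperedges sum to zero, i.e. ∑_{j∈ι} (E j − Re(E j)) = 0, and (the discrete isothermic condition with vanishing dual real parts) ∑_{j∈ι} (E j) * (b j − a) = 0. Then: (i) ∑_{j∈ι} conj(a) * (E j) * (b j) = (|a|² ∑_{j∈ι} Re(E j)) · 1, so the transformed hyperedges conj(a)·(E j)·(b j) again close up to a real scalar; and (ii) ∑_{j∈ι} (conj(a) * (E j) * (b j)) * ((b j)⁻¹ − a⁻¹) = 0, i.e. the transformed hyperedges satisfy the isothermic condition with the Möbius-transformed dual points (b j)⁻¹, a⁻¹. (Vertex-wise form of: the Möbius transformation f* ↦ (f*)⁻¹ of the Christoffel dual of a discrete isothermic surface is dual to the isothermic surface with hyperedges Ẽ_ij = conj(f*_i)·E_ij·f*_j.) -/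
open scoped Quaternion

open Quaternion in
/-- Vertex-wise form of the Möbius invariance of discrete isothermic surfaces:
the Möbius transformation `f* ↦ (f*)⁻¹` of the Christoffel dual is dual to the
isothermic surface with hyperedges `Ẽ_ij = conj(f*_i) · E_ij · f*_j`. Here `a`
plays the role of `f*_i`, `b j` of the dual vertices `f*_j`, `E j` of the
hyperedges at the vertex. -/
theorem stmt0 {ι : Type*} [Fintype ι]
    (a : ℍ[ℝ]) (ha : a ≠ 0) (ha' : a.re = 0)
    (b : ι → ℍ[ℝ]) (hb : ∀ j, b j ≠ 0) (hb' : ∀ j, (b j).re = 0)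
    (E : ι → ℍ[ℝ])
    (hclose : ∑ j, (E j - ((E j).re : ℍ[ℝ])) = 0)
    (hiso : ∑ j, E j * (b j - a) = 0) :
    (∑ j, star a * E j * b j = ((‖a‖ ^ 2 * ∑ j, (E j).re : ℝ) : ℍ[ℝ])) ∧
      ∑ j, (star a * E j * b j) * ((b j)⁻¹ - a⁻¹) = 0 := by
  set r : ℝ := ∑ j, (E j).re with hr
  have hsum : ∑ j, E j = (r : ℍ[ℝ]) := by
    rw [Finset.sum_sub_distrib, sub_eq_zero] at hclose
    rw [hclose, hr]
    exact (map_sum (algebraMap ℝ ℍ[ℝ]) (fun j => (E j).re) Finset.univ).symm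
  have hnormSq : Quaternion.normSq a = ‖a‖ ^ 2 := by
    rw [Quaternion.normSq_eq_norm_mul_self, sq]
  have hstar : star a * a = ((‖a‖ ^ 2 : ℝ) : ℍ[ℝ]) := by
    rw [Quaternion.star_mul_self, hnormSq]
  -- part (i)
  have h0 : ∑ j, star a * (E j * (b j - a)) = 0 := by
    rw [← Finset.mul_sum, hiso, mul_zero]
  have key : ∑ j, star a * E j * b j = ((‖a‖ ^ 2 * r : ℝ) : ℍ[ℝ]) := by
    have expand : ∀ j, star a * E j * b j
        = star a * (E j * (b j - a)) + star a * E j * a := by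
      intro j; rw [mul_sub, mul_sub, ← mul_assoc, ← mul_assoc, sub_add_cancel]
    calc ∑ j, star a * E j * b j
        = ∑ j, (star a * (E j * (b j - a)) + star a * E j * a) := by
          simp_rw [expand]
      _ = ∑ j, star a * (E j * (b j - a)) + (∑ j, star a * E j) * a := by
          rw [Finset.sum_add_distrib, Finset.sum_mul]
      _ = star a * (∑ j, E j) * a := by rw [h0, zero_add, Finset.mul_sum]
      _ = ((‖a‖ ^ 2 * r : ℝ) : ℍ[ℝ]) := by
          rw [hsum, mul_assoc, Quaternion.coe_commutes, ← mul_assoc, hstar,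
            ← Quaternion.coe_mul]
  refine ⟨key, ?_⟩
  -- part (ii)
  have hainv : ((‖a‖ ^ 2 : ℝ) : ℍ[ℝ]) * a⁻¹ = star a := by
    rw [← hstar, mul_assoc, mul_inv_cancel₀ ha, mul_one]
  have expand2 : ∀ j, (star a * E j * b j) * ((b j)⁻¹ - a⁻¹)
      = star a * E j - (star a * E j * b j) * a⁻¹ := by
    intro j
    rw [mul_sub, mul_assoc (star a * E j), mul_inv_cancel₀ (hb j), mul_one]
  calc ∑ j, (star a * E j * b j) * ((b j)⁻¹ - a⁻¹)
      = (∑ j, star a * E j) - (∑ j, star a * E j * b j) * a⁻¹ := by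
        simp_rw [expand2]; rw [Finset.sum_sub_distrib, Finset.sum_mul]
    _ = star a * (r : ℍ[ℝ]) - ((‖a‖ ^ 2 * r : ℝ) : ℍ[ℝ]) * a⁻¹ := by
        rw [← Finset.mul_sum, hsum, key]
    _ = 0 := by
        rw [Quaternion.coe_mul, Quaternion.coe_commutes (‖a‖ ^ 2) ((r : ℝ) : ℍ[ℝ]),
          mul_assoc, hainv, Quaternion.coe_commutes, sub_self]
end

section
/- Let ι be a finite index set, let n ∈ ℍ be a pure-imaginary quaternion with |n| = 1, let m : ι → ℍ assign to each index a pure-imaginary quaternion with |m j| = 1, and let E : ι → ℍ with every E j nonzero (hence invertible). Assume the normal-transport relation (E j)⁻¹ * n * (E j) = −(m j) for every j ∈ ι, and assume ∑_{j∈ι} E j = 0 (which combines the minimality condition that the real parts of the hyperedges sum to zero with the closedness of the surface edges). Then ∑_{j∈ι} (E j) * (m j − n) = 0. In other words, a face-edge-constraint discrete minimal surface satisfies the discrete isothermic condition with its face normal as Christoffel dual. -/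
open scoped Quaternion

/-- A face-edge-constraint discrete minimal surface satisfies the discrete
isothermic condition with its face normal as Christoffel dual: `n` is the
normal at the central vertex, `m j` the normals on the adjacent faces, and
`E j` the hyperedges `2𝐇_ij + df_ij` at the vertex. -/
theorem stmt1 {ι : Type*} [Fintype ι]
    (n : ℍ[ℝ]) (hn : n.re = 0) (hn1 : ‖n‖ = 1)
    (m : ι → ℍ[ℝ]) (hm : ∀ j, (m j).re = 0) (hm1 : ∀ j, ‖m j‖ = 1)
    (E : ι → ℍ[ℝ]) (hE : ∀ j, E j ≠ 0)
    (htrans : ∀ j, (E j)⁻¹ * n * E j = -(m j))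
    (hsum : ∑ j, E j = 0) :
    ∑ j, E j * (m j - n) = 0 := by
  have key : ∀ j, E j * m j = -(n * E j) := by
    intro j
    have h := congrArg (fun q => E j * q) (htrans j)
    simp only [mul_neg, ← mul_assoc, mul_inv_cancel₀ (hE j), one_mul] at h
    rw [eq_comm, neg_eq_iff_eq_neg] at h; exact h
  calc ∑ j, E j * (m j - n)
      = ∑ j, (-(n * E j) - E j * n) := by
        refine Finset.sum_congr rfl fun j _ => ?_
        rw [mul_sub, key j]
    _ = -(n * ∑ j, E j) - (∑ j, E j) * n := by
        rw [Finset.sum_sub_distrib, Finset.sum_neg_distrib, ← Finset.mul_sum,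
          ← Finset.sum_mul]
    _ = 0 := by rw [hsum, mul_zero, zero_mul, neg_zero, sub_zero]
end

section
/- Let z0, z1, z2, z3 ∈ ℂ satisfy z0 ≠ z1, z1 ≠ z2, z2 ≠ z3, z3 ≠ z0 and z0 ≠ z2, and let α1, α2 ∈ ℂ. Then the cross-ratio relation α2·(z0 − z1)·(z2 − z3) = α1·(z1 − z2)·(z3 − z0) holds if and only if the three-leg relation α1/(z0 − z1) − α2/(z0 − z3) = (α1 − α2)/(z0 − z2) holds. -/
/-- Equivalence of the cross-ratio relation and the three-leg relation on an
elementary quadrilateral. -/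
theorem stmt2 (z0 z1 z2 z3 : ℂ)
    (h01 : z0 ≠ z1) (h12 : z1 ≠ z2) (h23 : z2 ≠ z3) (h30 : z3 ≠ z0)
    (h02 : z0 ≠ z2) (α1 α2 : ℂ) :
    α2 * (z0 - z1) * (z2 - z3) = α1 * (z1 - z2) * (z3 - z0) ↔
      α1 / (z0 - z1) - α2 / (z0 - z3) = (α1 - α2) / (z0 - z2) := by
  have h1 : z0 - z1 ≠ 0 := sub_ne_zero.mpr h01
  have h3 : z0 - z3 ≠ 0 := sub_ne_zero.mpr (Ne.symm h30)
  have h2 : z0 - z2 ≠ 0 := sub_ne_zero.mpr h02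
  rw [div_sub_div _ _ h1 h3, div_eq_div_iff (mul_ne_zero h1 h3) h2]
  constructor <;> intro h <;> linear_combination h
end

section
/- Let n ≥ 1, let z0 ∈ ℂ, and let w, b : ZMod n → ℂ and α : ZMod n → ℂ be given (w k are the 'white' neighbours, b k the 'black' neighbours of z0, and α k the edge labels, indexed cyclically). Assume for every k ∈ ZMod n: z0 ≠ w k, w k ≠ b k, b k ≠ w (k+1), w (k+1) ≠ z0, z0 ≠ b k, and the cross-ratio relation α (k+1) · (z0 − w k) · (b k − w (k+1)) = α k · (w k − b k) · (w (k+1) − z0) for the elementary quadrilateral (z0, w k, b k, w (k+1)) with labels α k, α (k+1). Then the additive rational Toda equation holds at z0: ∑_{k ∈ ZMod n} (α k − α (k+1))/(z0 − b k) = 0. -/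
/-- Summing the three-leg forms of the cross-ratio system around a vertex of a
quad-graph yields the additive rational Toda equation at that vertex. -/
theorem stmt3 (n : ℕ) [NeZero n] (z0 : ℂ) (w b α : ZMod n → ℂ)
    (h1 : ∀ k, z0 ≠ w k) (h2 : ∀ k, w k ≠ b k) (h3 : ∀ k, b k ≠ w (k + 1))
    (h4 : ∀ k, w (k + 1) ≠ z0) (h5 : ∀ k, z0 ≠ b k)
    (hcr : ∀ k, α (k + 1) * (z0 - w k) * (b k - w (k + 1)) =
      α k * (w k - b k) * (w (k + 1) - z0)) :
    ∑ k : ZMod n, (α k - α (k + 1)) / (z0 - b k) = 0 := by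
  have key : ∀ k : ZMod n, (α k - α (k + 1)) / (z0 - b k) =
      α k / (z0 - w k) - α (k + 1) / (z0 - w (k + 1)) := by
    intro k
    have hb : z0 - b k ≠ 0 := sub_ne_zero.mpr (h5 k)
    have hw : z0 - w k ≠ 0 := sub_ne_zero.mpr (h1 k)
    have hw' : z0 - w (k + 1) ≠ 0 := sub_ne_zero.mpr fun h => h4 k h.symm
    rw [div_sub_div _ _ hw hw', div_eq_div_iff hb (mul_ne_zero hw hw')]
    linear_combination -hcr k
  rw [Finset.sum_congr rfl fun k _ => key k, Finset.sum_sub_distrib]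
  rw [show ∑ k : ZMod n, α (k + 1) / (z0 - w (k + 1)) =
      ∑ k : ZMod n, α k / (z0 - w k) from
    Fintype.sum_equiv (Equiv.addRight 1) _ _ fun k => rfl]
  ring
end

section
/- Let H ∈ ℝ be nonzero, let z0, z1, z2, z3 ∈ ℂ with z0 ≠ z1, z1 ≠ z2, z2 ≠ z3, z3 ≠ z0, and let α1, α2 ∈ ℂ. For w ≠ w' in ℂ, β ∈ ℂ and λ ∈ ℂ \ {0}, define the 2×2 complex matrix L(w, w', β)(λ) with rows (1, H(w − w')λ⁻¹) and ((β/(w − w'))·λ⁻¹, 1). Then the compatibility condition L(z1, z2, α2)(λ) · L(z0, z1, α1)(λ) = L(z3, z2, α1)(λ) · L(z0, z3, α2)(λ) holds for all λ ∈ ℂ \ {0} if and only if the cross-ratio relation α2(z0 − z1)(z2 − z3) = α1(z1 − z2)(z3 − z0) holds. -/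
open Matrix

/-- The (unnormalized) discrete holomorphic potential of an edge from vertex
value `w` to vertex value `w'`, with Hopf differential label `β` and mean
curvature parameter `H`, evaluated at the loop parameter `l`. -/
noncomputable def Lpot (H : ℝ) (w w' β : ℂ) (l : ℂ) : Matrix (Fin 2) (Fin 2) ℂ :=
  !![1, (H : ℂ) * (w - w') * l⁻¹;
     (β / (w - w')) * l⁻¹, 1]

/-- The compatibility condition of the discrete holomorphic potential around an
elementary quadrilateral is equivalent to the cross-ratio relation. -/
theorem stmt5 (H : ℝ) (hH : H ≠ 0) (z0 z1 z2 z3 : ℂ)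
    (h01 : z0 ≠ z1) (h12 : z1 ≠ z2) (h23 : z2 ≠ z3) (h30 : z3 ≠ z0)
    (α1 α2 : ℂ) :
    (∀ l : ℂ, l ≠ 0 →
        Lpot H z1 z2 α2 l * Lpot H z0 z1 α1 l =
          Lpot H z3 z2 α1 l * Lpot H z0 z3 α2 l) ↔
      α2 * (z0 - z1) * (z2 - z3) = α1 * (z1 - z2) * (z3 - z0) := by
  have d01 : z0 - z1 ≠ 0 := sub_ne_zero.mpr h01
  have d12 : z1 - z2 ≠ 0 := sub_ne_zero.mpr h12
  have d23 : z2 - z3 ≠ 0 := sub_ne_zero.mpr h23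
  have d30 : z3 - z0 ≠ 0 := sub_ne_zero.mpr h30
  have d32 : z3 - z2 ≠ 0 := fun h => d23 (by linear_combination -h)
  have d03 : z0 - z3 ≠ 0 := fun h => d30 (by linear_combination -h)
  have hHc : (H : ℂ) ≠ 0 := by exact_mod_cast hH
  constructor
  · intro h
    have h00 := congrFun (congrFun (h 1 one_ne_zero) 0) 0
    simp [Lpot, Matrix.mul_apply, Fin.sum_univ_two] at h00
    field_simp at h00
    have key : (H : ℂ) * (α2 * (z0 - z1) * (z2 - z3)) =
        (H : ℂ) * (α1 * (z1 - z2) * (z3 - z0)) := by linear_combination (H : ℂ) * h00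
    exact mul_left_cancel₀ hHc key
  · intro heq l hl
    ext i j
    fin_cases i <;> fin_cases j <;>
      simp [Lpot, Matrix.mul_apply, Fin.sum_univ_two] <;>
      field_simp
    · linear_combination heq
    · ring
    · linear_combination (-(z0 - z1 + z2 - z3)) * heq
    · linear_combination (-1 : ℂ) * heq
end

section
/- Let H ∈ ℝ be nonzero, α1 ∈ ℂ, and z0, z1, z0*, z1* ∈ ℂ with z1 ≠ z0 and H(z0* − z1*)(z1 − z0) = α1 (the duality relation along the edge). Then for every λ ∈ ℂ \ {0}, the product of 2×2 complex matrices A*(z0*)·L·A(z1)⁻¹ equals the matrix with rows (1, −Hz0·λ⁻¹) and (−Hz1*·λ⁻¹, 1 + H(Hz0z1* − α1)λ⁻²), where A*(w) has rows (1, 0), (−Hw·λ⁻¹, 1), A(w) has rows (1, Hw·λ⁻¹), (0, 1), and L has rows (1, H(z1 − z0)λ⁻¹), (H(z0* − z1*)λ⁻¹, 1). In particular, the gauged transition matrix A*(z0*)·L·A(z1)⁻¹ depends only on z0, z1* (and H, α1, λ), and not on z0* and z1 individually. -/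
open Matrix

/-- The gauged transition matrix `A*(z0*)·L·A(z1)⁻¹` of the discrete
holomorphic potential depends only on `z0` and `z1*` (and `H`, `α1`, `λ`), not
on `z0*` and `z1` individually. -/
theorem stmt6 (H : ℝ) (hH : H ≠ 0) (α1 : ℂ) (z0 z1 z0s z1s : ℂ)
    (hz : z1 ≠ z0)
    (hdual : (H : ℂ) * (z0s - z1s) * (z1 - z0) = α1) :
    ∀ l : ℂ, l ≠ 0 →
      (!![1, 0; -(H : ℂ) * z0s * l⁻¹, 1] : Matrix (Fin 2) (Fin 2) ℂ) *
          !![1, (H : ℂ) * (z1 - z0) * l⁻¹; (H : ℂ) * (z0s - z1s) * l⁻¹, 1] *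
          (!![1, (H : ℂ) * z1 * l⁻¹; 0, 1] : Matrix (Fin 2) (Fin 2) ℂ)⁻¹ =
        !![1, -(H : ℂ) * z0 * l⁻¹;
           -(H : ℂ) * z1s * l⁻¹,
           1 + (H : ℂ) * ((H : ℂ) * z0 * z1s - α1) * (l⁻¹) ^ 2] := by
  intro l hl
  have hinv : (!![1, (H : ℂ) * z1 * l⁻¹; 0, 1] : Matrix (Fin 2) (Fin 2) ℂ)⁻¹ =
      !![1, -((H : ℂ) * z1 * l⁻¹); 0, 1] := by
    apply inv_eq_right_inv
    ext i j
    fin_cases i <;> fin_cases j <;>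
      simp [Matrix.mul_apply, Fin.sum_univ_two]
  rw [hinv]
  subst hdual
  ext i j
  fin_cases i <;> fin_cases j <;>
    simp [Matrix.mul_apply, Fin.sum_univ_two] <;>
    field_simp <;> ring
end

section
/- Let E01, E12, E32, E03 be quaternions and set E02 := E32 − conj(E03). (i) If |E01| = |E32|, E12 * E01 = E32 * E03, and E02 = E01 − conj(E12), then E02 * conj(E32) = conj(E01) * E02. (ii) If |E12| = |E03|, E01 * E12 = E03 * E32, and E02 = E01 − conj(E12), then E02 * E12 = E03 * E02. (These are the quaternionic closing identities: together with the norm equalities they say that the opposite hyperedges of an elementary quadrilateral are related by conjugation with the diagonal hyperedge E02, which yields the defining equations f*3 − f2 = E02⁻¹(f0 − f*1)E02 and f*3 − f0 = E02⁻¹(f2 − f*1)E02 of a discrete CMC pair.) -/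
open scoped Quaternion

/-- Quaternionic closing identities for the hyperedges of an elementary
quadrilateral: together with the norm equalities they say the opposite
hyperedges are related by conjugation with the diagonal hyperedge `E02`. -/
theorem stmt8 (E01 E12 E32 E03 E02 : ℍ[ℝ])
    (hE02 : E02 = E32 - star E03) :
    ((‖E01‖ = ‖E32‖ → E12 * E01 = E32 * E03 → E02 = E01 - star E12 →
        E02 * star E32 = star E01 * E02) ∧
      (‖E12‖ = ‖E03‖ → E01 * E12 = E03 * E32 → E02 = E01 - star E12 →
        E02 * E12 = E03 * E02)) := by
  constructor
  · intro hn hm hE02'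
    have hns : Quaternion.normSq E01 = Quaternion.normSq E32 := by
      rw [Quaternion.normSq_eq_norm_mul_self, Quaternion.normSq_eq_norm_mul_self, hn]
    have h1 : star E01 * E01 = E32 * star E32 := by
      rw [Quaternion.star_mul_self, Quaternion.self_mul_star, hns]
    have hm' : star E01 * star E12 = star E03 * star E32 := by
      rw [← star_mul, ← star_mul, hm]
    calc E02 * star E32 = E32 * star E32 - star E03 * star E32 := by
          rw [hE02, sub_mul]
      _ = star E01 * E01 - star E01 * star E12 := by rw [h1, hm']
      _ = star E01 * E02 := by rw [hE02', mul_sub]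
  · intro hn hm hE02'
    have hns : Quaternion.normSq E12 = Quaternion.normSq E03 := by
      rw [Quaternion.normSq_eq_norm_mul_self, Quaternion.normSq_eq_norm_mul_self, hn]
    have h1 : star E12 * E12 = E03 * star E03 := by
      rw [Quaternion.star_mul_self, Quaternion.self_mul_star, hns]
    calc E02 * E12 = E01 * E12 - star E12 * E12 := by rw [hE02', sub_mul]
      _ = E03 * E32 - E03 * star E03 := by rw [hm, h1]
      _ = E03 * E02 := by rw [hE02, mul_sub]
end

section
/- Let H ∈ ℝ and α1, α2 ∈ ℂ; for each edge label e ∈ {01, 12, 32, 03} let d_e, u_e ∈ ℂ with u_e ≠ 0, set α_{01} = α_{32} = α1 and α_{12} = α_{03} = α2, and for λ ∈ ℂ \ {0} define U_e(λ) = matrix with rows (d_e, λ⁻¹Hu_e − λ·conj(α_e)/conj(u_e)) and (λ⁻¹α_e/u_e − λH·conj(u_e), conj(d_e)). Then U_{12}(λ)·U_{01}(λ) = U_{32}(λ)·U_{03}(λ) holds for all λ ∈ ℂ \ {0} if and only if the following four conditions hold: (1) H²(conj(u_{03})u_{32} − conj(u_{01})u_{12}) + d_{12}d_{01} − d_{32}d_{03}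 + conj(α1)α2/(u_{03}·conj(u_{32})) − α1·conj(α2)/(u_{01}·conj(u_{12})) = 0; (2) H·(α1·u_{12}·u_{03} − α2·u_{01}·u_{32}) = 0; (3) H·(−d_{12}u_{01} − conj(d_{01})u_{12} + d_{32}u_{03} + conj(d_{03})u_{32}) = 0; (4) α2·u_{01}·u_{32}·(d_{01}u_{03} − conj(d_{32})u_{12}) = α1·u_{12}·u_{03}·(d_{03}u_{01} − conj(d_{12})u_{32}). -/
open Matrix Complex

/-- The transition matrix of the extended frame of a discrete CMC surface with
mean curvature parameter `H`, edge data `d`, `u` and Hopf differential label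
`α`, evaluated at the loop parameter `l`. -/
noncomputable def UedgeL (H : ℝ) (d u α : ℂ) (l : ℂ) : Matrix (Fin 2) (Fin 2) ℂ :=
  !![d, l⁻¹ * (H : ℂ) * u - l * (starRingEnd ℂ α) / (starRingEnd ℂ u);
     l⁻¹ * α / u - l * (H : ℂ) * (starRingEnd ℂ u), starRingEnd ℂ d]

private lemma auxEven {a b c a' b' c' : ℂ}
    (h : ∀ l : ℂ, l ≠ 0 → a * l ^ 2 + b * l ^ 4 + c * l ^ 6 =
      a' * l ^ 2 + b' * l ^ 4 + c' * l ^ 6) :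
    a = a' ∧ b = b' ∧ c = c' := by
  have h1 := h 1 one_ne_zero
  have h2 := h 2 two_ne_zero
  have h3 := h 3 three_ne_zero
  refine ⟨?_, ?_, ?_⟩
  · linear_combination (3/2) * h1 - (3/20) * h2 + (1/90) * h3
  · linear_combination (-13/24) * h1 + (1/6) * h2 - (1/72) * h3
  · linear_combination (1/24) * h1 - (1/60) * h2 + (1/360) * h3

private lemma auxOdd {a b a' b' : ℂ}
    (h : ∀ l : ℂ, l ≠ 0 → a * l ^ 3 + b * l ^ 5 = a' * l ^ 3 + b' * l ^ 5) :
    a = a' ∧ b = b' := by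
  have h1 := h 1 one_ne_zero
  have h2 := h 2 two_ne_zero
  exact ⟨by linear_combination (4/3) * h1 - (1/24) * h2,
    by linear_combination (-1/3) * h1 + (1/24) * h2⟩

private lemma cancel_ne {x y : ℂ} (h : x * y = 0) (hy : y ≠ 0) : x = 0 :=
  (mul_eq_zero.mp h).resolve_right hy

set_option maxHeartbeats 1000000 in
private lemma compat_iff
    (K α1 α2 a1 a2 d01 d12 d32 d03 e01 e12 e32 e03 u01 u12 u32 u03 v01 v12 v32 v03 : ℂ)
    (hu01 : u01 ≠ 0) (hu12 : u12 ≠ 0) (hu32 : u32 ≠ 0) (hu03 : u03 ≠ 0)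
    (hv01 : v01 ≠ 0) (hv12 : v12 ≠ 0) (hv32 : v32 ≠ 0) (hv03 : v03 ≠ 0) :
    (∀ l : ℂ, l ≠ 0 →
        (!![d12, l⁻¹ * K * u12 - l * a2 / v12;
            l⁻¹ * α2 / u12 - l * K * v12, e12] : Matrix (Fin 2) (Fin 2) ℂ) *
          !![d01, l⁻¹ * K * u01 - l * a1 / v01;
            l⁻¹ * α1 / u01 - l * K * v01, e01] =
        !![d32, l⁻¹ * K * u32 - l * a1 / v32;
            l⁻¹ * α1 / u32 - l * K * v32, e32] *
          !![d03, l⁻¹ * K * u03 - l * a2 / v03;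
            l⁻¹ * α2 / u03 - l * K * v03, e03]) ↔
      (K * (α1 * u12 * u03 - α2 * u01 * u32) = 0 ∧
       (K ^ 2 * (v03 * u32 - v01 * u12) + d12 * d01 - d32 * d03) * (u01 * v12 * u03 * v32) +
         a1 * α2 * (u01 * v12) - α1 * a2 * (u03 * v32) = 0 ∧
       K * (a2 * v01 * v32 - a1 * v03 * v12) = 0 ∧
       K * (-(d12 * u01) - e01 * u12 + d32 * u03 + e03 * u32) = 0 ∧
       a2 * v01 * v32 * (e01 * v03 - d32 * v12) = a1 * v12 * v03 * (e03 * v01 - d12 * v32) ∧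
       α2 * u01 * u32 * (d01 * u03 - e32 * u12) = α1 * u12 * u03 * (d03 * u01 - e12 * u32) ∧
       K * (-(e12 * v01) - d01 * v12 + e32 * v03 + d03 * v32) = 0 ∧
       (K ^ 2 * (u03 * v32 - u01 * v12) + e12 * e01 - e32 * e03) * (v01 * u12 * v03 * u32) +
         α1 * a2 * (v01 * u12) - a1 * α2 * (v03 * u32) = 0) := by
  constructor
  · intro h
    have key00 : ∀ l : ℂ, l ≠ 0 →
        (K * α1 * u12 * (u03 * v12 * v32)) * l ^ 2 +
          ((d12 * d01 - K ^ 2 * u12 * v01) * (u01 * v12 * u03 * v32) -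
            α1 * a2 * (u03 * v32)) * l ^ 4 +
          (K * a2 * v01 * (u01 * u03 * v32)) * l ^ 6 =
        (K * α2 * u32 * (u01 * v12 * v32)) * l ^ 2 +
          ((d32 * d03 - K ^ 2 * u32 * v03) * (u01 * v12 * u03 * v32) -
            α2 * a1 * (u01 * v12)) * l ^ 4 +
          (K * a1 * v03 * (u01 * u03 * v12)) * l ^ 6 := by
      intro l hl
      have e := congrFun (congrFun (h l hl) 0) 0
      simp only [Matrix.mul_apply, Fin.sum_univ_two, Matrix.cons_val', Matrix.cons_val_zero,
        Matrix.cons_val_one, Matrix.head_cons, Matrix.head_fin_const, Matrix.empty_val',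
        Matrix.cons_val_fin_one, Matrix.of_apply] at e
      linear_combination (norm := skip) (l ^ 4 * (u01 * v12 * u03 * v32)) * e
      field_simp
      ring
    have key01 : ∀ l : ℂ, l ≠ 0 →
        (K * (d12 * u01 + u12 * e01) * (v01 * v12 * v03 * v32)) * l ^ 3 +
          (-(d12 * a1 * v12 + a2 * e01 * v01) * (v03 * v32)) * l ^ 5 =
        (K * (d32 * u03 + u32 * e03) * (v01 * v12 * v03 * v32)) * l ^ 3 +
          (-(d32 * a2 * v32 + a1 * e03 * v03) * (v01 * v12)) * l ^ 5 := by
      intro l hl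
      have e := congrFun (congrFun (h l hl) 0) 1
      simp only [Matrix.mul_apply, Fin.sum_univ_two, Matrix.cons_val', Matrix.cons_val_zero,
        Matrix.cons_val_one, Matrix.head_cons, Matrix.head_fin_const, Matrix.empty_val',
        Matrix.cons_val_fin_one, Matrix.of_apply] at e
      linear_combination (norm := skip) (l ^ 4 * (v01 * v12 * v03 * v32)) * e
      field_simp
      ring
    have key10 : ∀ l : ℂ, l ≠ 0 →
        ((α2 * d01 * u01 + α1 * e12 * u12) * (u32 * u03)) * l ^ 3 +
          (-(K * (v12 * d01 + v01 * e12)) * (u01 * u12 * u32 * u03)) * l ^ 5 =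
        ((α1 * d03 * u03 + α2 * e32 * u32) * (u01 * u12)) * l ^ 3 +
          (-(K * (v32 * d03 + v03 * e32)) * (u01 * u12 * u32 * u03)) * l ^ 5 := by
      intro l hl
      have e := congrFun (congrFun (h l hl) 1) 0
      simp only [Matrix.mul_apply, Fin.sum_univ_two, Matrix.cons_val', Matrix.cons_val_zero,
        Matrix.cons_val_one, Matrix.head_cons, Matrix.head_fin_const, Matrix.empty_val',
        Matrix.cons_val_fin_one, Matrix.of_apply] at e
      linear_combination (norm := skip) (l ^ 4 * (u01 * u12 * u32 * u03)) * e
      field_simp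
      ring
    have key11 : ∀ l : ℂ, l ≠ 0 →
        (K * α2 * u01 * (v01 * u32 * v03)) * l ^ 2 +
          ((e12 * e01 - K ^ 2 * u01 * v12) * (u12 * v01 * u32 * v03) -
            α2 * a1 * (u32 * v03)) * l ^ 4 +
          (K * a1 * v12 * (u12 * u32 * v03)) * l ^ 6 =
        (K * α1 * u03 * (v03 * u12 * v01)) * l ^ 2 +
          ((e32 * e03 - K ^ 2 * u03 * v32) * (u12 * v01 * u32 * v03) -
            α1 * a2 * (u12 * v01)) * l ^ 4 +
          (K * a2 * v32 * (u12 * v01 * u32)) * l ^ 6 := by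
      intro l hl
      have e := congrFun (congrFun (h l hl) 1) 1
      simp only [Matrix.mul_apply, Fin.sum_univ_two, Matrix.cons_val', Matrix.cons_val_zero,
        Matrix.cons_val_one, Matrix.head_cons, Matrix.head_fin_const, Matrix.empty_val',
        Matrix.cons_val_fin_one, Matrix.of_apply] at e
      linear_combination (norm := skip) (l ^ 4 * (u12 * v01 * u32 * v03)) * e
      field_simp
      ring
    obtain ⟨hP2, hP4, hP6⟩ := auxEven key00
    obtain ⟨hR2, hR4⟩ := auxOdd key01
    obtain ⟨hS2, hS4⟩ := auxOdd key10
    obtain ⟨hT2, hT4, hT6⟩ := auxEven key11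
    refine ⟨?_, by linear_combination hP4, ?_, ?_, by linear_combination -hR4,
      by linear_combination hS2, ?_, by linear_combination hT4⟩
    · exact cancel_ne (show _ * (v12 * v32) = 0 by linear_combination hP2)
        (mul_ne_zero hv12 hv32)
    · exact cancel_ne (show _ * (u01 * u03) = 0 by linear_combination hP6)
        (mul_ne_zero hu01 hu03)
    · exact cancel_ne (show _ * (v01 * v12 * v03 * v32) = 0 by linear_combination -hR2)
        (mul_ne_zero (mul_ne_zero (mul_ne_zero hv01 hv12) hv03) hv32)
    · exact cancel_ne (show _ * (u01 * u12 * u32 * u03) = 0 by linear_combination hS4)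
        (mul_ne_zero (mul_ne_zero (mul_ne_zero hu01 hu12) hu32) hu03)
  · rintro ⟨E1, E2, E3, E4, E5, E6, E7, E8⟩ l hl
    ext i j
    fin_cases i <;> fin_cases j <;>
      simp only [Matrix.mul_apply, Fin.sum_univ_two, Matrix.cons_val', Matrix.cons_val_zero,
        Matrix.cons_val_one, Matrix.head_cons, Matrix.head_fin_const, Matrix.empty_val',
        Matrix.cons_val_fin_one, Matrix.of_apply, Fin.mk_zero, Fin.mk_one]
    · linear_combination (norm := skip) (l ^ 4 * (u01 * v12 * u03 * v32))⁻¹ * ((l ^ 2 * (v12 * v32)) * E1 + l ^ 4 * E2 + (l ^ 6 * (u01 * u03)) * E3)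
      field_simp
      ring
    · linear_combination (norm := skip) (l ^ 4 * (v01 * v12 * v03 * v32))⁻¹ * ((-(l ^ 3 * (v01 * v12 * v03 * v32))) * E4 - l ^ 5 * E5)
      field_simp
      ring
    · linear_combination (norm := skip) (l ^ 4 * (u01 * u12 * u32 * u03))⁻¹ * (l ^ 3 * E6 + (l ^ 5 * (u01 * u12 * u32 * u03)) * E7)
      field_simp
      ring
    · linear_combination (norm := skip) (l ^ 4 * (u12 * v01 * u32 * v03))⁻¹ * ((-(l ^ 2 * (v01 * v03))) * E1 + l ^ 4 * E8 - (l ^ 6 * (u12 * u32)) * E3)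
      field_simp
      ring

/-- The compatibility (zero-curvature) condition of the extended frame of a
discrete CMC surface around an elementary quadrilateral is equivalent to the
four listed conditions on the edge data. -/
theorem stmt12 (H : ℝ) (α1 α2 : ℂ)
    (d01 d12 d32 d03 u01 u12 u32 u03 : ℂ)
    (hu01 : u01 ≠ 0) (hu12 : u12 ≠ 0) (hu32 : u32 ≠ 0) (hu03 : u03 ≠ 0) :
    (∀ l : ℂ, l ≠ 0 →
        UedgeL H d12 u12 α2 l * UedgeL H d01 u01 α1 l =
          UedgeL H d32 u32 α1 l * UedgeL H d03 u03 α2 l) ↔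
      ((H : ℂ) ^ 2 * (starRingEnd ℂ u03 * u32 - starRingEnd ℂ u01 * u12) +
          d12 * d01 - d32 * d03 +
          starRingEnd ℂ α1 * α2 / (u03 * starRingEnd ℂ u32) -
          α1 * starRingEnd ℂ α2 / (u01 * starRingEnd ℂ u12) = 0 ∧
        (H : ℂ) * (α1 * u12 * u03 - α2 * u01 * u32) = 0 ∧
        (H : ℂ) * (-(d12 * u01) - starRingEnd ℂ d01 * u12 +
          d32 * u03 + starRingEnd ℂ d03 * u32) = 0 ∧
        α2 * u01 * u32 * (d01 * u03 - starRingEnd ℂ d32 * u12) =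
          α1 * u12 * u03 * (d03 * u01 - starRingEnd ℂ d12 * u32)) := by
  have hc01 : starRingEnd ℂ u01 ≠ 0 := by simpa using hu01
  have hc12 : starRingEnd ℂ u12 ≠ 0 := by simpa using hu12
  have hc32 : starRingEnd ℂ u32 ≠ 0 := by simpa using hu32
  have hc03 : starRingEnd ℂ u03 ≠ 0 := by simpa using hu03
  have base := compat_iff (H : ℂ) α1 α2 (starRingEnd ℂ α1) (starRingEnd ℂ α2)
    d01 d12 d32 d03 (starRingEnd ℂ d01) (starRingEnd ℂ d12) (starRingEnd ℂ d32)
    (starRingEnd ℂ d03) u01 u12 u32 u03 (starRingEnd ℂ u01) (starRingEnd ℂ u12)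
    (starRingEnd ℂ u32) (starRingEnd ℂ u03) hu01 hu12 hu32 hu03 hc01 hc12 hc32 hc03
  simp only [UedgeL]
  rw [base]
  constructor
  · rintro ⟨E1, E2, E3, E4, E5, E6, E7, E8⟩
    refine ⟨?_, E1, E4, E6⟩
    have h1 : (u01 * starRingEnd ℂ u12) ≠ 0 := mul_ne_zero hu01 hc12
    have h2 : (u03 * starRingEnd ℂ u32) ≠ 0 := mul_ne_zero hu03 hc32
    field_simp
    linear_combination E2
  · rintro ⟨h1, h2, h3, h4⟩
    refine ⟨h2, ?_, ?_, h3, ?_, h4, ?_, ?_⟩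
    · have h1' := h1
      field_simp at h1'
      linear_combination h1'
    · have := congrArg (starRingEnd ℂ) h2
      simp only [_root_.map_mul, map_sub, map_zero, Complex.conj_ofReal, Complex.conj_conj] at this
      linear_combination -this
    · have := congrArg (starRingEnd ℂ) h4
      simp only [_root_.map_mul, map_sub, Complex.conj_conj] at this
      linear_combination this
    · have := congrArg (starRingEnd ℂ) h3
      simp only [_root_.map_mul, map_sub, map_add, map_neg, map_zero, Complex.conj_ofReal,
        Complex.conj_conj] at this
      linear_combination this
    · have := congrArg (starRingEnd ℂ) h1
      simp only [_root_.map_mul, map_sub, map_add, map_pow, map_div₀, map_zero, Complex.conj_ofReal,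
        Complex.conj_conj] at this
      field_simp at this
      linear_combination this
end

section
/- Let z*_i, z*_j ∈ ℂ with z*_i ≠ z*_j, and set c_k := 1/√(1 + |z*_k|²) for k ∈ {i, j}. For λ ∈ ℂ \ {0} define Φ_k(λ) := c_k · (matrix with rows (1, conj(z*_k)·λ) and (−z*_k·λ⁻¹, 1)). Then det Φ_k(λ) = 1 and Φ_j(λ)·Φ_i(λ)⁻¹ = c_i·c_j · (matrix with rows (1 + conj(z*_j)·z*_i, (conj(z*_j) − conj(z*_i))·λ) and ((z*_i − z*_j)·λ⁻¹, 1 + conj(z*_i)·z*_j)). Moreover, if z_i, z_j ∈ ℂ and α ∈ ℂ satisfy z*_i − z*_j = α/(z_j − z_i), then this transition matrix equals the H = 0 extended-frame matrix with rows (d, −λ·conj(α)/conj(u)) and (λ⁻¹·α/u, conj(d)), where u := (α/(z*_i − z*_j))·√((1 + |z*_i|²)(1 + |z*_j|²)) and d := (1 + conj(z*_j)·z*_i)/√((1 + |z*_i|²)(1 + |z*_j|²)). Hence the extended frame with mean curvature H = 0 can be solved explicitly in terms of the dual discrete holomorphic function z*. -/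
open Matrix Complex

lemma auxsq (z : ℂ) (c : ℝ) (hc : c = 1 / Real.sqrt (1 + ‖z‖ ^ 2)) :
    (c : ℂ) ^ 2 * (1 + starRingEnd ℂ z * z) = 1 := by
  have h0 : (0:ℝ) < 1 + ‖z‖ ^ 2 := by positivity
  have hs : Real.sqrt (1 + ‖z‖ ^ 2) ^ 2 = 1 + ‖z‖ ^ 2 :=
    Real.sq_sqrt h0.le
  have h1 : starRingEnd ℂ z * z = ((‖z‖ ^ 2 : ℝ) : ℂ) := by
    rw [Complex.sq_norm]
    exact_mod_cast (Complex.normSq_eq_conj_mul_self (z := z)).symm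
  have hr : c ^ 2 * (1 + ‖z‖ ^ 2) = 1 := by
    rw [hc, div_pow, one_pow, hs, one_div_mul_cancel h0.ne']
  rw [h1]
  calc (c:ℂ)^2 * (1 + ((‖z‖ ^ 2 : ℝ) : ℂ))
      = ((c^2 * (1 + ‖z‖ ^2) : ℝ) : ℂ) := by push_cast; ring
    _ = 1 := by rw [hr]; norm_num

/-- The extended frame with mean curvature `H = 0` can be solved explicitly in
terms of the dual discrete holomorphic function `z*`: the explicit frames
`Φ_k(λ)` have determinant `1`, their transition matrix has the stated explicit
form, and, when `z*_i − z*_j = α/(z_j − z_i)`, it coincides with the `H = 0`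
extended-frame matrix with edge data `u`, `d`. -/
theorem stmt13 (zsi zsj : ℂ) (hne : zsi ≠ zsj)
    (ci cj : ℝ)
    (hci : ci = 1 / Real.sqrt (1 + ‖zsi‖ ^ 2))
    (hcj : cj = 1 / Real.sqrt (1 + ‖zsj‖ ^ 2))
    (Φi Φj : ℂ → Matrix (Fin 2) (Fin 2) ℂ)
    (hΦi : ∀ l : ℂ, Φi l = (ci : ℂ) •
      !![1, starRingEnd ℂ zsi * l; -zsi * l⁻¹, 1])
    (hΦj : ∀ l : ℂ, Φj l = (cj : ℂ) •
      !![1, starRingEnd ℂ zsj * l; -zsj * l⁻¹, 1]) :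
    ∀ l : ℂ, l ≠ 0 →
      (Φi l).det = 1 ∧ (Φj l).det = 1 ∧
      Φj l * (Φi l)⁻¹ = ((ci * cj : ℝ) : ℂ) •
        !![1 + starRingEnd ℂ zsj * zsi,
           (starRingEnd ℂ zsj - starRingEnd ℂ zsi) * l;
           (zsi - zsj) * l⁻¹, 1 + starRingEnd ℂ zsi * zsj] ∧
      (∀ zi zj α : ℂ, zsi - zsj = α / (zj - zi) →
        ∀ u d : ℂ,
          u = (α / (zsi - zsj)) *
            ((Real.sqrt ((1 + ‖zsi‖ ^ 2) * (1 + ‖zsj‖ ^ 2)) : ℝ) : ℂ) →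
          d = (1 + starRingEnd ℂ zsj * zsi) /
            ((Real.sqrt ((1 + ‖zsi‖ ^ 2) * (1 + ‖zsj‖ ^ 2)) : ℝ) : ℂ) →
          Φj l * (Φi l)⁻¹ =
            !![d, -l * starRingEnd ℂ α / starRingEnd ℂ u;
               l⁻¹ * α / u, starRingEnd ℂ d]) := by
  intro l hl
  have detgen : ∀ (z : ℂ) (c : ℝ), c = 1 / Real.sqrt (1 + ‖z‖ ^ 2) →
      ((c:ℂ) • !![1, starRingEnd ℂ z * l; -z * l⁻¹, 1]).det = 1 := by
    intro z c hc
    rw [Matrix.det_smul, Matrix.det_fin_two_of]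
    have h2 : (1:ℂ)*1 - starRingEnd ℂ z * l * (-z * l⁻¹) = 1 + starRingEnd ℂ z * z := by
      field_simp
      ring
    rw [h2]
    simpa using auxsq z c hc
  have hdi : (Φi l).det = 1 := by rw [hΦi]; exact detgen zsi ci hci
  have hdj : (Φj l).det = 1 := by rw [hΦj]; exact detgen zsj cj hcj
  have hBi : (Φi l)⁻¹ = (ci:ℂ) • !![1, -(starRingEnd ℂ zsi * l); zsi * l⁻¹, 1] := by
    apply Matrix.inv_eq_right_inv
    rw [hΦi, Matrix.smul_mul, Matrix.mul_smul, smul_smul, Matrix.mul_fin_two]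
    ext i j
    fin_cases i <;> fin_cases j <;> simp [Matrix.one_apply]
    · rw [show (starRingEnd ℂ) zsi * l * (zsi * l⁻¹) = starRingEnd ℂ zsi * zsi by
        field_simp]
      linear_combination auxsq zsi ci hci
    · rw [show zsi * l⁻¹ * (starRingEnd ℂ zsi * l) = starRingEnd ℂ zsi * zsi by
        field_simp]
      linear_combination auxsq zsi ci hci
  have htrans : Φj l * (Φi l)⁻¹ = ((ci * cj : ℝ) : ℂ) •
      !![1 + starRingEnd ℂ zsj * zsi,
         (starRingEnd ℂ zsj - starRingEnd ℂ zsi) * l;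
         (zsi - zsj) * l⁻¹, 1 + starRingEnd ℂ zsi * zsj] := by
    rw [hΦj, hBi, Matrix.smul_mul, Matrix.mul_smul, smul_smul, Matrix.mul_fin_two]
    push_cast
    rw [mul_comm (cj:ℂ) (ci:ℂ)]
    congr 1
    ext i j
    fin_cases i <;> fin_cases j <;> simp <;> (try field_simp) <;> (try ring)
  refine ⟨hdi, hdj, htrans, ?_⟩
  intro zi zj α hα u d hu hd
  have hz : zsi - zsj ≠ 0 := sub_ne_zero.mpr hne
  have hα0 : α ≠ 0 := by
    rintro rfl
    exact hz (by simpa using hα)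
  set S := Real.sqrt ((1 + ‖zsi‖ ^ 2) * (1 + ‖zsj‖ ^ 2)) with hSdef
  have hS : (0:ℝ) < S := Real.sqrt_pos.mpr (by positivity)
  have hSC : (S:ℂ) ≠ 0 := by exact_mod_cast hS.ne'
  have hccR : ci * cj = 1 / S := by
    rw [hci, hcj, hSdef, Real.sqrt_mul (by positivity)]
    rw [div_mul_div_comm, one_mul]
  have hcc : ((ci * cj : ℝ) : ℂ) = 1 / (S:ℂ) := by
    rw [hccR]; push_cast; ring
  have hα0' : starRingEnd ℂ α ≠ 0 := by simpa using hα0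
  have hz' : starRingEnd ℂ zsi - starRingEnd ℂ zsj ≠ 0 := by
    rw [sub_ne_zero]
    exact fun h => hne ((starRingEnd ℂ).injective h)
  rw [htrans, hcc]
  ext i j
  fin_cases i <;> fin_cases j <;>
    simp [hu, hd, _root_.map_mul, map_div₀, _root_.map_sub, _root_.map_add, Complex.conj_ofReal] <;>
    field_simp <;>
    ring
end

section
/- Let H ∈ ℝ be nonzero, p, q ∈ ℂ not both zero, c := (|p|² + H²|q|²)^{-1/2}, and define G, G* : ℝ → Matrix (Fin 2) (Fin 2) ℂ by G(s) := c·(matrix with rows (p, Hq·e^{√−1 s}) and (−H·conj(q)·e^{−√−1 s}, conj(p))) and G*(s) := c·(matrix with rows (p, Hq·e^{−√−1 s}) and (−H·conj(q)·e^{√−1 s}, conj(p))). Let Φ : ℝ → Matrix (Fin 2) (Fin 2) ℂ be differentiable with Φ(t) invertible for all t. Then for every t ∈ ℝ: (i) with 𝒫(s) := G(s)·Φ(s), one has 𝒫(t)⁻¹·𝒫'(t) − (√−1/2)·𝒫(t)⁻¹·σ₃·𝒫(t) = Φ(t)⁻¹·Φ'(t) − (√−1/2)·Φ(t)⁻¹·σ₃·Φ(t);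 and (ii) with 𝒬(s) := G*(s)·Φ(s), one has 𝒬(t)⁻¹·𝒬'(t) + (√−1/2)·𝒬(t)⁻¹·σ₃·𝒬(t) = Φ(t)⁻¹·Φ'(t) + (√−1/2)·Φ(t)⁻¹·σ₃·Φ(t). Consequently, the discrete Sym–Bobenko formulas f = −(1/H)(Φ⁻¹∂_tΦ − (√−1/2)Φ⁻¹σ₃Φ) and f* = −(1/H)(Φ⁻¹∂_tΦ + (√−1/2)Φ⁻¹σ₃Φ) are unchanged when the extended frame Φ is replaced by G·Φ, respectively G*·Φ (the computational core of the sub-lattice theorem: the gauged pair of extended frames produces the same CMC surface as the ungauged extended frame). -/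
open Matrix Complex

/-- The Pauli matrix `σ₃`. -/
noncomputable def sigma3 : Matrix (Fin 2) (Fin 2) ℂ := !![1, 0; 0, -1]

/-- Entrywise derivative of a matrix-valued function of a real variable. -/
noncomputable def mderiv (A : ℝ → Matrix (Fin 2) (Fin 2) ℂ) (t : ℝ) :
    Matrix (Fin 2) (Fin 2) ℂ :=
  Matrix.of fun i j => deriv (fun s => A s i j) t


lemma hasDerivAt_cexp_lin (ε : ℂ) (t : ℝ) :
    HasDerivAt (fun s : ℝ => Complex.exp (ε * s)) (ε * Complex.exp (ε * t)) t := by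
  have h1 : HasDerivAt (fun s : ℝ => (s : ℂ)) 1 t := by
    simpa using (hasDerivAt_id t).ofReal_comp
  have h2 := (h1.const_mul ε).cexp
  simpa [mul_comm] using h2

lemma mderiv_mul (A B : ℝ → Matrix (Fin 2) (Fin 2) ℂ)
    (hA : ∀ i j, Differentiable ℝ fun s => A s i j)
    (hB : ∀ i j, Differentiable ℝ fun s => B s i j) (t : ℝ) :
    mderiv (fun s => A s * B s) t = mderiv A t * B t + A t * mderiv B t := by
  ext i j
  have h : (fun s => (A s * B s) i j)
      = fun s => A s i 0 * B s 0 j + A s i 1 * B s 1 j := by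
    funext s; simp [Matrix.mul_apply, Fin.sum_univ_two]
  simp only [mderiv, Matrix.of_apply, Matrix.add_apply, Matrix.mul_apply,
    Fin.sum_univ_two, h]
  rw [deriv_fun_add (((hA i 0) t).fun_mul ((hB 0 j) t)) (((hA i 1) t).fun_mul ((hB 1 j) t)),
    deriv_fun_mul ((hA i 0) t) ((hB 0 j) t), deriv_fun_mul ((hA i 1) t) ((hB 1 j) t)]
  ring

lemma gauge_key (a b d e : ℂ) (ε : ℂ) (M : ℝ → Matrix (Fin 2) (Fin 2) ℂ)
    (hM : ∀ s : ℝ, M s = !![a, b * Complex.exp (ε * s);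
      d * Complex.exp (-(ε * s)), e]) (t : ℝ) :
    mderiv M t = (ε / 2) • (sigma3 * M t - M t * sigma3) := by
  ext i j
  have hd1 : ∀ w : ℂ, deriv (fun x : ℝ => Complex.exp (w * x)) t
      = w * Complex.exp (w * t) := fun w => (hasDerivAt_cexp_lin w t).deriv
  have hd2 : deriv (fun x : ℝ => Complex.exp (-(ε * x))) t
      = -ε * Complex.exp (-(ε * t)) := by
    have := (hasDerivAt_cexp_lin (-ε) t).deriv
    simpa [neg_mul] using this
  fin_cases i <;> fin_cases j <;>
    simp [mderiv, hM, sigma3, Matrix.mul_apply, Fin.sum_univ_two, hd1, hd2] <;>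
    ring

lemma gauge_diff (a b d e : ℂ) (ε : ℂ) (M : ℝ → Matrix (Fin 2) (Fin 2) ℂ)
    (hM : ∀ s : ℝ, M s = !![a, b * Complex.exp (ε * s);
      d * Complex.exp (-(ε * s)), e]) :
    ∀ i j, Differentiable ℝ fun s => M s i j := by
  have he : ∀ w : ℂ, Differentiable ℝ fun s : ℝ => Complex.exp (w * s) :=
    fun w => ((Complex.ofRealCLM.differentiable.const_mul w)).cexp
  intro i j
  fin_cases i <;> fin_cases j <;> simp only [hM] <;> simp <;>
    first
    | exact (he ε).const_mul b
    | · rw [show (fun s : ℝ => d * Complex.exp (-(ε * s))) =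
          fun s : ℝ => d * Complex.exp ((-ε) * s) by funext s; ring_nf]
        exact (he (-ε)).const_mul d

lemma gauge_cancel (A B A' B' S : Matrix (Fin 2) (Fin 2) ℂ) (z : ℂ)
    (hA : A⁻¹ * A = 1) (hkey : A' = z • (S * A - A * S)) :
    (A * B)⁻¹ * (A' * B + A * B') - z • ((A * B)⁻¹ * S * (A * B))
      = B⁻¹ * B' - z • (B⁻¹ * S * B) := by
  have cancel : ∀ X : Matrix (Fin 2) (Fin 2) ℂ, A⁻¹ * (A * X) = X := fun X => by
    rw [← Matrix.mul_assoc, hA, Matrix.one_mul]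
  rw [Matrix.mul_inv_rev, hkey]
  simp only [Matrix.mul_add, Matrix.add_mul, Matrix.sub_mul, Matrix.mul_sub,
    smul_sub, smul_add, mul_smul_comm, smul_mul_assoc, Matrix.mul_assoc, cancel]
  abel

/-- Computational core of the sub-lattice theorem: the discrete Sym–Bobenko
formulas are unchanged when the extended frame `Φ` is replaced by the gauged
frames `G·Φ` (for the primal formula) and `G*·Φ` (for the dual formula). -/
theorem stmt14 (H : ℝ) (hH : H ≠ 0) (p q : ℂ) (hpq : p ≠ 0 ∨ q ≠ 0)
    (c : ℝ) (hc : c = 1 / Real.sqrt (‖p‖ ^ 2 + H ^ 2 * ‖q‖ ^ 2))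
    (G Gs : ℝ → Matrix (Fin 2) (Fin 2) ℂ)
    (hG : ∀ s : ℝ, G s = (c : ℂ) •
      !![p, (H : ℂ) * q * Complex.exp (I * s);
         -((H : ℂ) * starRingEnd ℂ q * Complex.exp (-(I * s))), starRingEnd ℂ p])
    (hGs : ∀ s : ℝ, Gs s = (c : ℂ) •
      !![p, (H : ℂ) * q * Complex.exp (-(I * s));
         -((H : ℂ) * starRingEnd ℂ q * Complex.exp (I * s)), starRingEnd ℂ p])
    (Φ : ℝ → Matrix (Fin 2) (Fin 2) ℂ)
    (hΦdiff : ∀ i j, Differentiable ℝ fun s => Φ s i j)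
    (hΦinv : ∀ s, IsUnit (Φ s)) (t : ℝ) :
    ((G t * Φ t)⁻¹ * mderiv (fun s => G s * Φ s) t -
        (I / 2) • ((G t * Φ t)⁻¹ * sigma3 * (G t * Φ t)) =
      (Φ t)⁻¹ * mderiv Φ t - (I / 2) • ((Φ t)⁻¹ * sigma3 * Φ t)) ∧
    ((Gs t * Φ t)⁻¹ * mderiv (fun s => Gs s * Φ s) t +
        (I / 2) • ((Gs t * Φ t)⁻¹ * sigma3 * (Gs t * Φ t)) =
      (Φ t)⁻¹ * mderiv Φ t + (I / 2) • ((Φ t)⁻¹ * sigma3 * Φ t)) := by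
  -- normal forms of the gauges
  have hGform : ∀ s : ℝ, G s = !![(c : ℂ) * p, ((c : ℂ) * ((H : ℂ) * q)) * Complex.exp (I * s);
      ((c : ℂ) * (-((H : ℂ) * starRingEnd ℂ q))) * Complex.exp (-(I * s)), (c : ℂ) * starRingEnd ℂ p] := by
    intro s
    rw [hG s]
    ext i j
    fin_cases i <;> fin_cases j <;> simp <;> ring
  have hGsform : ∀ s : ℝ, Gs s = !![(c : ℂ) * p, ((c : ℂ) * ((H : ℂ) * q)) * Complex.exp ((-I) * s);
      ((c : ℂ) * (-((H : ℂ) * starRingEnd ℂ q))) * Complex.exp (-((-I) * s)), (c : ℂ) * starRingEnd ℂ p] := by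
    intro s
    rw [hGs s]
    ext i j
    fin_cases i <;> fin_cases j <;> simp [neg_mul, neg_neg] <;> ring
  -- determinant is 1
  have hS : 0 < ‖p‖ ^ 2 + H ^ 2 * ‖q‖ ^ 2 := by
    rcases hpq with h | h
    · have hp := norm_pos_iff.mpr h
      positivity
    · have hq := norm_pos_iff.mpr h
      have h2 : 0 < H ^ 2 * ‖q‖ ^ 2 := by positivity
      nlinarith [sq_nonneg ‖p‖]
  have hc2 : c ^ 2 * (‖p‖ ^ 2 + H ^ 2 * ‖q‖ ^ 2) = 1 := by
    rw [hc, div_pow, one_pow, Real.sq_sqrt hS.le, one_div, inv_mul_cancel₀ hS.ne']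
  have habs : (c : ℂ) ^ 2 * (p * starRingEnd ℂ p + (H : ℂ) ^ 2 * (q * starRingEnd ℂ q)) = 1 := by
    rw [Complex.mul_conj, Complex.mul_conj, Complex.normSq_eq_norm_sq, Complex.normSq_eq_norm_sq]
    exact_mod_cast hc2
  have hdetG : (G t).det = 1 := by
    have hee : Complex.exp (I * t) * Complex.exp (-(I * t)) = 1 := by
      rw [← Complex.exp_add]; simp
    rw [hGform t, Matrix.det_fin_two_of]
    linear_combination habs +
      ((c : ℂ) ^ 2 * (H : ℂ) ^ 2 * q * starRingEnd ℂ q) * hee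
  have hdetGs : (Gs t).det = 1 := by
    have hee : Complex.exp ((-I) * t) * Complex.exp (-((-I) * t)) = 1 := by
      rw [← Complex.exp_add]; simp
    rw [hGsform t, Matrix.det_fin_two_of]
    linear_combination habs +
      ((c : ℂ) ^ 2 * (H : ℂ) ^ 2 * q * starRingEnd ℂ q) * hee
  have hGinv : (G t)⁻¹ * G t = 1 :=
    Matrix.nonsing_inv_mul _ (by rw [hdetG]; exact isUnit_one)
  have hGsinv : (Gs t)⁻¹ * Gs t = 1 :=
    Matrix.nonsing_inv_mul _ (by rw [hdetGs]; exact isUnit_one)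
  -- key derivative identities
  have hkeyG : mderiv G t = (I / 2) • (sigma3 * G t - G t * sigma3) :=
    gauge_key _ _ _ _ I G hGform t
  have hkeyGs : mderiv Gs t = (-(I / 2)) • (sigma3 * Gs t - Gs t * sigma3) := by
    have := gauge_key _ _ _ _ (-I) Gs hGsform t
    rwa [neg_div] at this
  constructor
  · rw [mderiv_mul G Φ (gauge_diff _ _ _ _ _ G hGform) hΦdiff t]
    exact gauge_cancel (G t) (Φ t) (mderiv G t) (mderiv Φ t) sigma3 (I / 2) hGinv hkeyG
  · rw [mderiv_mul Gs Φ (gauge_diff _ _ _ _ _ Gs hGsform) hΦdiff t]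
    have h := gauge_cancel (Gs t) (Φ t) (mderiv Gs t) (mderiv Φ t) sigma3
      (-(I / 2)) hGsinv hkeyGs
    rwa [neg_smul, sub_neg_eq_add, neg_smul, sub_neg_eq_add] at h
end
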